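/- arXiv:2102.11448 — 2 statements merged into one kernel-verified Lean document; each statement's English description precedes it below -/
import Mathlib

section
/- Let M* (the true dynamics) and M̂ (the estimated dynamics) be two deterministic transition models, and suppose the value function V^π_{M̂} is L-Lipschitz as a function of the initial state. Then for every initial state s₀, the performance of π on the true dynamics admits the additive lower bound V^π_{M*}(s₀) ≥ V^π_{M̂}(s₀) − κ · L · E_{(s,a)∼ρ^π_{M*}}[dist(M*(s,a), M̂(s,a))], where the visitation expectation is taken along the trajectory of M* from s₀ and the inequality is interpreted in the extended reals. -/
open scoped ENNReal

/-- Trajectory of a deterministic model `M` under policy `π` from initial state `s₀`. -/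
noncomputable def traj {S A : Type*} (M : S × A → S) (π : S → A) (s₀ : S) : ℕ → S
  | 0 => s₀
  | n + 1 => M (traj M π s₀ n, π (traj M π s₀ n))

/-- Value function `V^π_M(s₀) = Σ_t γ^t r(s_t, π(s_t))` along the trajectory of `M`. -/
noncomputable def value {S A : Type*} (M : S × A → S) (π : S → A)
    (r : S × A → ℝ) (γ : ℝ) (s₀ : S) : ℝ :=
  ∑' t : ℕ, γ ^ t * r (traj M π s₀ t, π (traj M π s₀ t))

/-- Discounted visitation expectation (along the trajectory of `M` from `s₀`) of the
distance between the next-state predictions of `M` and `M'`, a value in `[0,∞]`. -/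
noncomputable def visitDiscrepancy {S A : Type*} [MetricSpace S]
    (M M' : S × A → S) (π : S → A) (γ : ℝ) (s₀ : S) : ℝ≥0∞ :=
  ENNReal.ofReal (1 - γ) *
    ∑' t : ℕ, ENNReal.ofReal (γ ^ t) *
      ENNReal.ofReal (dist (M (traj M π s₀ t, π (traj M π s₀ t)))
        (M' (traj M π s₀ t, π (traj M π s₀ t))))

section Aux
variable {S A : Type*}

lemma traj_shift (M : S × A → S) (π : S → A) (s₀ : S) (n : ℕ) :
    traj M π s₀ (n + 1) = traj M π (M (s₀, π s₀)) n := by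
  induction n with
  | zero => rfl
  | succ n ih =>
      show M (traj M π s₀ (n+1), π (traj M π s₀ (n+1))) = traj M π (M (s₀, π s₀)) (n+1)
      rw [ih]
      rfl

lemma summable_value (M : S × A → S) (π : S → A) (r : S × A → ℝ) {R γ : ℝ}
    (hγ0 : 0 ≤ γ) (hγ1 : γ < 1) (hR : ∀ p, |r p| ≤ R) (s : S) :
    Summable (fun t : ℕ => γ ^ t * r (traj M π s t, π (traj M π s t))) := by
  apply Summable.of_norm_bounded (g := fun t : ℕ => R * γ ^ t)
    ((summable_geometric_of_lt_one hγ0 hγ1).mul_left R)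
  intro t
  rw [Real.norm_eq_abs, abs_mul, abs_pow, abs_of_nonneg hγ0, mul_comm]
  exact mul_le_mul_of_nonneg_right (hR _) (pow_nonneg hγ0 t)

lemma abs_value_le (M : S × A → S) (π : S → A) (r : S × A → ℝ) {R γ : ℝ}
    (hγ0 : 0 ≤ γ) (hγ1 : γ < 1) (hR : ∀ p, |r p| ≤ R) (s : S) :
    |value M π r γ s| ≤ R * (1 - γ)⁻¹ := by
  have hs := summable_value M π r hγ0 hγ1 hR s
  have hgeo : Summable (fun t : ℕ => R * γ ^ t) :=
    (summable_geometric_of_lt_one hγ0 hγ1).mul_left R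
  have hb : ∀ t : ℕ, |γ ^ t * r (traj M π s t, π (traj M π s t))| ≤ R * γ ^ t := by
    intro t
    rw [abs_mul, abs_pow, abs_of_nonneg hγ0, mul_comm]
    exact mul_le_mul_of_nonneg_right (hR _) (pow_nonneg hγ0 t)
  have hsum : (∑' t : ℕ, R * γ ^ t) = R * (1 - γ)⁻¹ := by
    rw [tsum_mul_left, tsum_geometric_of_lt_one hγ0 hγ1]
  rw [value, abs_le]
  constructor
  · have h1 : (∑' t : ℕ, -(R * γ ^ t))
        ≤ ∑' t : ℕ, γ ^ t * r (traj M π s t, π (traj M π s t)) :=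
      Summable.tsum_le_tsum (fun t => (abs_le.1 (hb t)).1) hgeo.neg hs
    calc -(R * (1 - γ)⁻¹) = ∑' t : ℕ, -(R * γ ^ t) := by rw [tsum_neg, hsum]
      _ ≤ _ := h1
  · calc (∑' t : ℕ, γ ^ t * r (traj M π s t, π (traj M π s t)))
        ≤ ∑' t : ℕ, R * γ ^ t := Summable.tsum_le_tsum (fun t => (abs_le.1 (hb t)).2) hs hgeo
      _ = R * (1 - γ)⁻¹ := hsum

lemma bellman (M : S × A → S) (π : S → A) (r : S × A → ℝ) {R γ : ℝ}
    (hγ0 : 0 ≤ γ) (hγ1 : γ < 1) (hR : ∀ p, |r p| ≤ R) (s : S) :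
    value M π r γ s = r (s, π s) + γ * value M π r γ (M (s, π s)) := by
  have hs := summable_value M π r hγ0 hγ1 hR s
  rw [value, Summable.tsum_eq_zero_add hs]
  have h0 : γ ^ 0 * r (traj M π s 0, π (traj M π s 0)) = r (s, π s) := by
    simp [traj]
  rw [h0]
  congr 1
  have hterm : ∀ n : ℕ, γ ^ (n + 1) * r (traj M π s (n + 1), π (traj M π s (n + 1)))
      = γ * (γ ^ n * r (traj M π (M (s, π s)) n, π (traj M π (M (s, π s)) n))) := by
    intro n
    rw [traj_shift, pow_succ]
    ring
  rw [tsum_congr hterm, tsum_mul_left]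
  rfl

end Aux

/-- If `V^π_M̂` is `L`-Lipschitz in the initial state, then in the extended reals
`V^π_{M*}(s₀) ≥ V^π_{M̂}(s₀) − κ·L·E_{(s,a)∼ρ^π_{M*}}[dist(M*(s,a), M̂(s,a))]`,
where the discounted visitation expectation (a value in `[0,∞]`) is taken along the
trajectory of `M*` from `s₀`. -/
theorem value_true_ge_value_est_sub_model_error
    {S A : Type*} [MetricSpace S]
    (Mstar Mhat : S × A → S) (π : S → A) (r : S × A → ℝ) (R γ L : ℝ)
    (hγ0 : 0 < γ) (hγ1 : γ < 1)
    (hR : ∀ p : S × A, |r p| ≤ R)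
    (hL : 0 ≤ L)
    (hLip : ∀ s s' : S, |value Mhat π r γ s - value Mhat π r γ s'| ≤ L * dist s s')
    (s₀ : S) :
    (value Mhat π r γ s₀ : EReal) -
        ((ENNReal.ofReal (γ / (1 - γ) * L) *
          visitDiscrepancy Mstar Mhat π γ s₀ : ℝ≥0∞) : EReal) ≤
      (value Mstar π r γ s₀ : EReal) := by
  have hγ0' : (0:ℝ) ≤ γ := hγ0.le
  have h1γ : (0:ℝ) < 1 - γ := by linarith
  set st : ℕ → S := traj Mstar π s₀ with hst
  set d : ℕ → ℝ := fun t => dist (Mstar (st t, π (st t))) (Mhat (st t, π (st t))) with hd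
  set g : ℕ → ℝ := fun t => L * (γ ^ (t + 1) * d t) with hg
  have hdnn : ∀ t, 0 ≤ d t := fun t => dist_nonneg
  have hgnn : ∀ t, 0 ≤ g t := fun t =>
    mul_nonneg hL (mul_nonneg (pow_nonneg hγ0' _) (hdnn t))
  -- Telescoping bound
  have key : ∀ n : ℕ,
      |value Mhat π r γ s₀ - (∑ t ∈ Finset.range n, γ ^ t * r (st t, π (st t)))
        - γ ^ n * value Mhat π r γ (st n)|
      ≤ ∑ t ∈ Finset.range n, g t := by
    intro n
    induction n with
    | zero => simp [st, traj]
    | succ n ih =>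
      have hb := bellman Mhat π r hγ0' hγ1 hR (st n)
      have hstep : st (n + 1) = Mstar (st n, π (st n)) := rfl
      have expand : value Mhat π r γ s₀
            - (∑ t ∈ Finset.range (n + 1), γ ^ t * r (st t, π (st t)))
            - γ ^ (n + 1) * value Mhat π r γ (st (n + 1))
          = (value Mhat π r γ s₀ - (∑ t ∈ Finset.range n, γ ^ t * r (st t, π (st t)))
              - γ ^ n * value Mhat π r γ (st n))
            + γ ^ (n + 1) * (value Mhat π r γ (Mhat (st n, π (st n)))
              - value Mhat π r γ (st (n + 1))) := by
        rw [Finset.sum_range_succ, hb]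
        ring
      rw [expand, Finset.sum_range_succ]
      refine (abs_add_le _ _).trans (add_le_add ih ?_)
      rw [abs_mul, abs_pow, abs_of_nonneg hγ0']
      have hlip := hLip (Mhat (st n, π (st n))) (st (n + 1))
      have hdist : dist (Mhat (st n, π (st n))) (st (n + 1)) = d n := by
        rw [hstep]; exact dist_comm _ _
      rw [hdist] at hlip
      calc γ ^ (n + 1) * |value Mhat π r γ (Mhat (st n, π (st n)))
              - value Mhat π r γ (st (n + 1))|
          ≤ γ ^ (n + 1) * (L * d n) :=
            mul_le_mul_of_nonneg_left hlip (pow_nonneg hγ0' _)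
        _ = g n := by rw [hg]; ring
  -- Limit: if g is summable then |V̂ - V*| ≤ ∑' g
  have main : Summable g →
      |value Mhat π r γ s₀ - value Mstar π r γ s₀| ≤ ∑' t, g t := by
    intro hgsum
    have hv := summable_value Mstar π r hγ0' hγ1 hR s₀
    have hS : Filter.Tendsto (fun n => ∑ t ∈ Finset.range n, γ ^ t * r (st t, π (st t)))
        Filter.atTop (nhds (value Mstar π r γ s₀)) := hv.hasSum.tendsto_sum_nat
    have hT : Filter.Tendsto (fun n : ℕ => γ ^ n * value Mhat π r γ (st n))
        Filter.atTop (nhds 0) := by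
      have hC : ∀ n : ℕ, ‖γ ^ n * value Mhat π r γ (st n)‖ ≤ R * (1 - γ)⁻¹ * γ ^ n := by
        intro n
        rw [Real.norm_eq_abs, abs_mul, abs_pow, abs_of_nonneg hγ0', mul_comm]
        exact mul_le_mul_of_nonneg_right (abs_value_le Mhat π r hγ0' hγ1 hR (st n))
          (pow_nonneg hγ0' n)
      have hgeo : Filter.Tendsto (fun n : ℕ => R * (1 - γ)⁻¹ * γ ^ n)
          Filter.atTop (nhds 0) := by
        have := (tendsto_pow_atTop_nhds_zero_of_lt_one hγ0' hγ1).const_mul (R * (1 - γ)⁻¹)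
        simp only [mul_zero] at this
        exact this
      exact squeeze_zero_norm hC hgeo
    have hE : Filter.Tendsto
        (fun n => |value Mhat π r γ s₀ - (∑ t ∈ Finset.range n, γ ^ t * r (st t, π (st t)))
          - γ ^ n * value Mhat π r γ (st n)|)
        Filter.atTop (nhds |value Mhat π r γ s₀ - value Mstar π r γ s₀|) := by
      have h0 : Filter.Tendsto (fun _ : ℕ => value Mhat π r γ s₀) Filter.atTop
          (nhds (value Mhat π r γ s₀)) := tendsto_const_nhds
      have := ((h0.sub hS).sub hT).abs
      rw [sub_zero] at this
      exact this
    exact le_of_tendsto hE (Filter.Eventually.of_forall fun n =>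
      (key n).trans (Summable.sum_le_tsum _ (fun i _ => hgnn i) hgsum))
  -- Case split on finiteness
  set c : ℝ≥0∞ := ENNReal.ofReal (γ / (1 - γ) * L) * visitDiscrepancy Mstar Mhat π γ s₀ with hc
  by_cases hctop : c = ⊤
  · rw [hctop]
    rw [EReal.coe_ennreal_top]
    rw [EReal.sub_top]
    exact bot_le
  · -- finite case
    have hBle : ∑' t, g t ≤ c.toReal ∧ Summable g := by
      rcases eq_or_lt_of_le hL with hL0 | hLpos
      · have hg0 : g = fun _ => (0:ℝ) := by
          funext t; rw [hg, ← hL0]; ring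
        constructor
        · rw [hg0]; simpa using ENNReal.toReal_nonneg
        · rw [hg0]; exact summable_zero
      · -- L > 0, so visitDiscrepancy is finite
        have hκL : 0 < γ / (1 - γ) * L := by positivity
        have hofκ : ENNReal.ofReal (γ / (1 - γ) * L) ≠ 0 := by
          simp [ENNReal.ofReal_eq_zero, not_le, hκL]
        have hD : visitDiscrepancy Mstar Mhat π γ s₀ ≠ ⊤ := by
          intro h
          apply hctop
          rw [hc, h, ENNReal.mul_top hofκ]
        have hT : (∑' t : ℕ, ENNReal.ofReal (γ ^ t) * ENNReal.ofReal (d t)) ≠ ⊤ := by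
          intro h
          apply hD
          rw [visitDiscrepancy, h, ENNReal.mul_top]
          simp only [ne_eq, ENNReal.ofReal_eq_zero, not_le]
          linarith
        have hterm : ∀ t : ℕ, ENNReal.ofReal (γ ^ t) * ENNReal.ofReal (d t)
            = ENNReal.ofReal (γ ^ t * d t) := fun t =>
          (ENNReal.ofReal_mul (pow_nonneg hγ0' t)).symm
        rw [tsum_congr hterm] at hT
        have hsum0 : Summable (fun t => γ ^ t * d t) := by
          have := ENNReal.summable_toReal hT
          convert this using 1
          funext t
          rw [ENNReal.toReal_ofReal (mul_nonneg (pow_nonneg hγ0' t) (hdnn t))]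
        have hgsum : Summable g := by
          have : g = fun t => (L * γ) * (γ ^ t * d t) := by
            funext t; rw [hg]; ring
          rw [this]
          exact hsum0.mul_left _
        constructor
        · -- compute c.toReal
          have hDval : (visitDiscrepancy Mstar Mhat π γ s₀).toReal
              = (1 - γ) * ∑' t, γ ^ t * d t := by
            rw [visitDiscrepancy, tsum_congr hterm, ENNReal.toReal_mul,
              ENNReal.toReal_ofReal h1γ.le,
              ENNReal.tsum_toReal_eq (fun t => ENNReal.ofReal_ne_top)]
            congr 1
            exact tsum_congr fun t =>
              ENNReal.toReal_ofReal (mul_nonneg (pow_nonneg hγ0' t) (hdnn t))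
          have hcval : c.toReal = γ / (1 - γ) * L * ((1 - γ) * ∑' t, γ ^ t * d t) := by
            rw [hc, ENNReal.toReal_mul, ENNReal.toReal_ofReal hκL.le, hDval]
          rw [hcval]
          have hgval : (∑' t, g t) = (L * γ) * ∑' t, γ ^ t * d t := by
            have : g = fun t => (L * γ) * (γ ^ t * d t) := by
              funext t; rw [hg]; ring
            rw [this, tsum_mul_left]
          rw [hgval]
          have : γ / (1 - γ) * L * ((1 - γ) * ∑' t, γ ^ t * d t)
              = (L * γ) * ∑' t, γ ^ t * d t := by
            field_simp
          rw [this]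
        · exact hgsum
    obtain ⟨hBle', hgsum⟩ := hBle
    have hmain := main hgsum
    have hreal : value Mhat π r γ s₀ - c.toReal ≤ value Mstar π r γ s₀ := by
      have h1 : value Mhat π r γ s₀ - value Mstar π r γ s₀ ≤ ∑' t, g t :=
        (le_abs_self _).trans hmain
      linarith [h1.trans hBle']
    calc (value Mhat π r γ s₀ : EReal) - (c : EReal)
        = ((value Mhat π r γ s₀ - c.toReal : ℝ) : EReal) := by
          have hcoe : (c : EReal) = ((c.toReal : ℝ) : EReal) := by
            rw [← ENNReal.ofReal_toReal hctop, EReal.coe_ennreal_ofReal,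
              max_eq_left ENNReal.toReal_nonneg, ENNReal.toReal_ofReal ENNReal.toReal_nonneg]
          rw [hcoe, ← EReal.coe_sub]
      _ ≤ (value Mstar π r γ s₀ : EReal) := by exact_mod_cast hreal
end

section
/- Suppose V_g is L-Lipschitz for some L ≥ 0. Then for every state s ∈ S and every j ≥ 0, the one-step difference of hybrid returns is bounded by the one-step model discrepancy along the f-trajectory: |W_{j+1}(s) − W_j(s)| ≤ L · γ^{j+1} · dist(f(f^j(s)), g(f^j(s))). -/
/-- Value function of a dynamics map `f`: `V_f(s) = Σ_t γ^t r(f^t(s))`. -/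
noncomputable def val {S : Type*} (f : S → S) (r : S → ℝ) (γ : ℝ) (s : S) : ℝ :=
  ∑' t : ℕ, γ ^ t * r (f^[t] s)

/-- Hybrid return: follow `f` for the first `j` steps, then `g` thereafter:
`W_j(s) = Σ_{t<j} γ^t r(f^t(s)) + γ^j V_g(f^j(s))`. -/
noncomputable def hyb {S : Type*} (f g : S → S) (r : S → ℝ) (γ : ℝ) (j : ℕ) (s : S) : ℝ :=
  (∑ t ∈ Finset.range j, γ ^ t * r (f^[t] s)) + γ ^ j * val g r γ (f^[j] s)

lemma summable_val {S : Type*} (g : S → S) (r : S → ℝ) (R γ : ℝ)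
    (hγ0 : 0 < γ) (hγ1 : γ < 1) (hR : ∀ s : S, |r s| ≤ R) (x : S) :
    Summable (fun t : ℕ => γ ^ t * r (g^[t] x)) := by
  apply Summable.of_norm
  have h : Summable (fun t : ℕ => R * γ ^ t) :=
    (summable_geometric_of_lt_one hγ0.le hγ1).mul_left R
  refine h.of_nonneg_of_le (fun t => norm_nonneg _) (fun t => ?_)
  rw [Real.norm_eq_abs, abs_mul, abs_pow, abs_of_pos hγ0, mul_comm]
  exact mul_le_mul_of_nonneg_right (hR _) (pow_nonneg hγ0.le t)

lemma val_bellman {S : Type*} (g : S → S) (r : S → ℝ) (R γ : ℝ)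
    (hγ0 : 0 < γ) (hγ1 : γ < 1) (hR : ∀ s : S, |r s| ≤ R) (x : S) :
    val g r γ x = r x + γ * val g r γ (g x) := by
  have hs := summable_val g r R γ hγ0 hγ1 hR x
  rw [val, Summable.tsum_eq_zero_add hs]
  simp only [pow_zero, one_mul, Function.iterate_succ_apply, pow_succ, val, ← tsum_mul_left]
  congr 1
  apply tsum_congr
  intro t
  ring

/-- If `V_g` is `L`-Lipschitz, the one-step difference of hybrid returns is bounded by the
one-step model discrepancy along the `f`-trajectory:
`|W_{j+1}(s) − W_j(s)| ≤ L·γ^{j+1}·dist(f(f^j(s)), g(f^j(s)))`. -/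
theorem abs_hyb_succ_sub_hyb_le
    {S : Type*} [MetricSpace S]
    (f g : S → S) (r : S → ℝ) (R γ L : ℝ)
    (hγ0 : 0 < γ) (hγ1 : γ < 1)
    (hR : ∀ s : S, |r s| ≤ R)
    (hL : 0 ≤ L)
    (hLip : ∀ s s' : S, |val g r γ s - val g r γ s'| ≤ L * dist s s')
    (s : S) (j : ℕ) :
    |hyb f g r γ (j + 1) s - hyb f g r γ j s| ≤
      L * γ ^ (j + 1) * dist (f (f^[j] s)) (g (f^[j] s)) := by
  have key : hyb f g r γ (j + 1) s - hyb f g r γ j s =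
      γ ^ (j + 1) * (val g r γ (f (f^[j] s)) - val g r γ (g (f^[j] s))) := by
    rw [hyb, hyb, Finset.sum_range_succ, val_bellman g r R γ hγ0 hγ1 hR (f^[j] s),
      Function.iterate_succ_apply']
    ring
  rw [key, abs_mul, abs_of_pos (pow_pos hγ0 _)]
  calc γ ^ (j + 1) * |val g r γ (f (f^[j] s)) - val g r γ (g (f^[j] s))|
      ≤ γ ^ (j + 1) * (L * dist (f (f^[j] s)) (g (f^[j] s))) :=
        mul_le_mul_of_nonneg_left (hLip _ _) (pow_pos hγ0 _).le
    _ = L * γ ^ (j + 1) * dist (f (f^[j] s)) (g (f^[j] s)) := by ring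
end
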